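/- arXiv:quant-ph/0009038 — 2 statements merged into one kernel-verified Lean document; each statement's English description precedes it below -/
import Mathlib

section
/- Let L be an orthomodular ortholattice and let a, b, c ∈ L. Then the following three conditions are equivalent: (i) (a ≡ b) ⊓ ((b ≡ c) ⊔ (a ≡ c)) ≤ (a ≡ c); (ii) (a ≡ b)ᶜ ⊔ ((a ≡ c) ≡ (b ≡ c)) = ⊤; (iii) (a ≡ b) ⊓ ((b ≡ c) ⊔ (a ≡ c)) = ((a ≡ b) ⊓ (b ≡ c)) ⊔ ((a ≡ b) ⊓ (a ≡ c)). -/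
/-- An ortholattice: a bounded lattice with an orthocomplementation. -/
class Ortholattice (α : Type*) extends Lattice α, BoundedOrder α, Compl α where
  compl_compl : ∀ x : α, xᶜᶜ = x
  compl_antitone : ∀ x y : α, x ≤ y → yᶜ ≤ xᶜ
  inf_compl : ∀ x : α, x ⊓ xᶜ = ⊥
  sup_compl : ∀ x : α, x ⊔ xᶜ = ⊤

/-- The identity operation `a ≡ b = (a ⊓ b) ⊔ (aᶜ ⊓ bᶜ)`. -/
def olEquiv {α : Type*} [Ortholattice α] (a b : α) : α := (a ⊓ b) ⊔ (aᶜ ⊓ bᶜ)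

namespace OLAux

variable {α : Type*} [Ortholattice α]

lemma cc (x : α) : xᶜᶜ = x := Ortholattice.compl_compl x

lemma compl_le_compl {x y : α} (h : x ≤ y) : yᶜ ≤ xᶜ :=
  Ortholattice.compl_antitone x y h

lemma oinf_compl (x : α) : x ⊓ xᶜ = ⊥ := Ortholattice.inf_compl x

lemma oocInf (x : α) : xᶜ ⊓ x = ⊥ := by
  rw [inf_comm]; exact oinf_compl x

lemma compl_inj {x y : α} (h : xᶜ = yᶜ) : x = y := by
  have := congrArg (·ᶜ) h
  simpa [cc] using this

lemma ocSup (x y : α) : (x ⊔ y)ᶜ = xᶜ ⊓ yᶜ := by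
  apply le_antisymm
  · exact le_inf (compl_le_compl le_sup_left) (compl_le_compl le_sup_right)
  · have hx : x ≤ (xᶜ ⊓ yᶜ)ᶜ := by
      have := compl_le_compl (inf_le_left : xᶜ ⊓ yᶜ ≤ xᶜ)
      rwa [cc] at this
    have hy : y ≤ (xᶜ ⊓ yᶜ)ᶜ := by
      have := compl_le_compl (inf_le_right : xᶜ ⊓ yᶜ ≤ yᶜ)
      rwa [cc] at this
    have := compl_le_compl (sup_le hx hy)
    rwa [cc] at this

lemma ocInf (x y : α) : (x ⊓ y)ᶜ = xᶜ ⊔ yᶜ := by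
  apply compl_inj
  rw [cc, ocSup, cc, cc]

lemma ocTop : (⊤ : α)ᶜ = ⊥ := by
  have := oinf_compl (⊤ : α)
  simpa using this

lemma ocBot : (⊥ : α)ᶜ = ⊤ := by
  apply compl_inj
  rw [cc, ocTop]

lemma eq_top_of_compl_eq_bot {x : α} (h : xᶜ = ⊥) : x = ⊤ := by
  apply compl_inj
  rw [h, ocTop]

/-- `t ≤ b → b ⊓ (t ⊔ bᶜ) = t` in an orthomodular lattice. -/
lemma omm2 (hOM : ∀ a b : α, a ≤ b → a ⊔ (aᶜ ⊓ b) = b)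
    {t b : α} (h : t ≤ b) : b ⊓ (t ⊔ bᶜ) = t := by
  have h1 : t ≤ b ⊓ (t ⊔ bᶜ) := le_inf h le_sup_left
  have h2 := hOM t (b ⊓ (t ⊔ bᶜ)) h1
  have h3 : tᶜ ⊓ (b ⊓ (t ⊔ bᶜ)) = ⊥ := by
    have hc : (t ⊔ bᶜ)ᶜ = tᶜ ⊓ b := by rw [ocSup, cc]
    calc tᶜ ⊓ (b ⊓ (t ⊔ bᶜ)) = (tᶜ ⊓ b) ⊓ (t ⊔ bᶜ) := by rw [inf_assoc]
      _ = (t ⊔ bᶜ)ᶜ ⊓ (t ⊔ bᶜ) := by rw [hc]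
      _ = ⊥ := oocInf _
  rw [h3, sup_bot_eq] at h2
  exact h2.symm

/-- Commutation relation. -/
def Cm (x y : α) : Prop := x = (x ⊓ y) ⊔ (x ⊓ yᶜ)

lemma Cm_of_le {x y : α} (h : x ≤ y) : Cm x y := by
  unfold Cm
  rw [inf_eq_left.mpr h, sup_eq_left.mpr inf_le_left]

lemma Cm_of_le_compl {x y : α} (h : x ≤ yᶜ) : Cm x y := by
  unfold Cm
  rw [inf_eq_left.mpr h, sup_eq_right.mpr inf_le_left]

lemma Cm_compl_right {x y : α} (h : Cm x y) : Cm x yᶜ := by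
  unfold Cm at *
  rw [cc, sup_comm]
  exact h

lemma Cm_symm (hOM : ∀ a b : α, a ≤ b → a ⊔ (aᶜ ⊓ b) = b)
    {x y : α} (h : Cm x y) : Cm y x := by
  unfold Cm at *
  have hxc : xᶜ = (xᶜ ⊔ yᶜ) ⊓ (xᶜ ⊔ y) := by
    conv_lhs => rw [h]
    rw [ocSup, ocInf, ocInf, cc]
  have h1 : y ⊓ xᶜ = y ⊓ (x ⊓ y)ᶜ := by
    rw [hxc, ocInf, ← inf_assoc]
    exact inf_eq_left.mpr (le_trans inf_le_left le_sup_right)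
  rw [h1]
  have h2 := hOM (x ⊓ y) y inf_le_right
  rw [inf_comm y x, inf_comm y ((x ⊓ y)ᶜ)]
  exact h2.symm

/-- Foulis–Holland style distributivity. -/
lemma FH (hOM : ∀ a b : α, a ≤ b → a ⊔ (aᶜ ⊓ b) = b)
    {x y b : α} (hx : Cm x b) (hy : Cm y b) :
    (x ⊔ y) ⊓ b = (x ⊓ b) ⊔ (y ⊓ b) := by
  set t := (x ⊓ b) ⊔ (y ⊓ b) with ht
  have htb : t ≤ b := sup_le inf_le_right inf_le_right
  have htxy : t ≤ x ⊔ y := sup_le (le_trans inf_le_left le_sup_left)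
    (le_trans inf_le_left le_sup_right)
  have h1 : t ≤ (x ⊔ y) ⊓ b := le_inf htxy htb
  have h2 := hOM t ((x ⊔ y) ⊓ b) h1
  have hxy : x ⊔ y ≤ t ⊔ bᶜ := by
    apply sup_le
    · rw [hx]; exact sup_le (le_trans le_sup_left le_sup_left)
        (le_trans inf_le_right le_sup_right)
    · rw [hy]; exact sup_le (le_trans le_sup_right le_sup_left)
        (le_trans inf_le_right le_sup_right)
  have h3 : tᶜ ⊓ ((x ⊔ y) ⊓ b) = ⊥ := by
    apply le_bot_iff.mp
    calc tᶜ ⊓ ((x ⊔ y) ⊓ b) ≤ tᶜ ⊓ ((t ⊔ bᶜ) ⊓ b) :=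
          inf_le_inf_left _ (inf_le_inf_right _ hxy)
      _ = tᶜ ⊓ t := by rw [inf_comm (t ⊔ bᶜ) b, omm2 hOM htb]
      _ = ⊥ := oocInf t
  rw [h3, sup_bot_eq] at h2
  exact h2.symm

lemma Cm_sup (hOM : ∀ a b : α, a ≤ b → a ⊔ (aᶜ ⊓ b) = b)
    {x y b : α} (hx : Cm x b) (hy : Cm y b) : Cm (x ⊔ y) b := by
  unfold Cm
  rw [FH hOM hx hy, FH hOM (Cm_compl_right hx) (Cm_compl_right hy)]
  calc x ⊔ y = ((x ⊓ b) ⊔ (x ⊓ bᶜ)) ⊔ ((y ⊓ b) ⊔ (y ⊓ bᶜ)) := by rw [← hx, ← hy]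
    _ = ((x ⊓ b) ⊔ (y ⊓ b)) ⊔ ((x ⊓ bᶜ) ⊔ (y ⊓ bᶜ)) := by ac_rfl

lemma Cm_compl_left (hOM : ∀ a b : α, a ≤ b → a ⊔ (aᶜ ⊓ b) = b)
    {x b : α} (h : Cm x b) : Cm xᶜ b :=
  Cm_symm hOM (Cm_compl_right (Cm_symm hOM h))

lemma Cm_inf (hOM : ∀ a b : α, a ≤ b → a ⊔ (aᶜ ⊓ b) = b)
    {x y b : α} (hx : Cm x b) (hy : Cm y b) : Cm (x ⊓ y) b := by
  have h := Cm_compl_left hOM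
    (Cm_sup hOM (Cm_compl_left hOM hx) (Cm_compl_left hOM hy))
  rwa [ocSup, cc, cc] at h

lemma Cm_equiv_right (hOM : ∀ a b : α, a ≤ b → a ⊔ (aᶜ ⊓ b) = b)
    (x y : α) : Cm (olEquiv x y) y :=
  Cm_sup hOM (Cm_of_le inf_le_right) (Cm_of_le_compl inf_le_right)

lemma Cm_equiv_left (hOM : ∀ a b : α, a ≤ b → a ⊔ (aᶜ ⊓ b) = b)
    (x y : α) : Cm (olEquiv x y) x :=
  Cm_sup hOM (Cm_of_le inf_le_left) (Cm_of_le_compl inf_le_left)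

lemma equiv_inf_right (hOM : ∀ a b : α, a ≤ b → a ⊔ (aᶜ ⊓ b) = b)
    (x y : α) : olEquiv x y ⊓ y = x ⊓ y := by
  unfold olEquiv
  rw [FH hOM (Cm_of_le inf_le_right) (Cm_of_le_compl inf_le_right)]
  have : (xᶜ ⊓ yᶜ) ⊓ y = ⊥ := by rw [inf_assoc, oocInf, inf_bot_eq]
  rw [this, sup_bot_eq, inf_eq_left.mpr inf_le_right]

lemma equiv_inf_compl_right (hOM : ∀ a b : α, a ≤ b → a ⊔ (aᶜ ⊓ b) = b)
    (x y : α) : olEquiv x y ⊓ yᶜ = xᶜ ⊓ yᶜ := by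
  unfold olEquiv
  have c1 : Cm (x ⊓ y) yᶜ := Cm_compl_right (Cm_of_le inf_le_right)
  have c2 : Cm (xᶜ ⊓ yᶜ) yᶜ := Cm_of_le inf_le_right
  rw [FH hOM c1 c2]
  have : (x ⊓ y) ⊓ yᶜ = ⊥ := by rw [inf_assoc, oinf_compl, inf_bot_eq]
  rw [this, bot_sup_eq, inf_eq_left.mpr inf_le_right]

lemma equiv_comm (x y : α) : olEquiv x y = olEquiv y x := by
  unfold olEquiv
  rw [inf_comm x y, inf_comm xᶜ yᶜ]

/-- Transitivity: `(a ≡ b) ⊓ (b ≡ c) ≤ (a ≡ c)`. -/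
lemma equiv_trans (hOM : ∀ a b : α, a ≤ b → a ⊔ (aᶜ ⊓ b) = b)
    (a b c : α) : olEquiv a b ⊓ olEquiv b c ≤ olEquiv a c := by
  have he : Cm (olEquiv a b) b := Cm_equiv_right hOM a b
  have hf : Cm (olEquiv b c) b := Cm_equiv_left hOM b c
  have hef : Cm (olEquiv a b ⊓ olEquiv b c) b := Cm_inf hOM he hf
  have h1 : (olEquiv a b ⊓ olEquiv b c) ⊓ b ≤ olEquiv a c := by
    have hle1 : (olEquiv a b ⊓ olEquiv b c) ⊓ b ≤ a := by
      calc (olEquiv a b ⊓ olEquiv b c) ⊓ b ≤ olEquiv a b ⊓ b :=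
            inf_le_inf_right b inf_le_left
        _ = a ⊓ b := equiv_inf_right hOM a b
        _ ≤ a := inf_le_left
    have hle2 : (olEquiv a b ⊓ olEquiv b c) ⊓ b ≤ c := by
      calc (olEquiv a b ⊓ olEquiv b c) ⊓ b ≤ olEquiv b c ⊓ b :=
            inf_le_inf_right b inf_le_right
        _ = c ⊓ b := by rw [equiv_comm b c, equiv_inf_right hOM c b]
        _ ≤ c := inf_le_left
    exact le_trans (le_inf hle1 hle2) le_sup_left
  have h2 : (olEquiv a b ⊓ olEquiv b c) ⊓ bᶜ ≤ olEquiv a c := by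
    have hle1 : (olEquiv a b ⊓ olEquiv b c) ⊓ bᶜ ≤ aᶜ := by
      calc (olEquiv a b ⊓ olEquiv b c) ⊓ bᶜ ≤ olEquiv a b ⊓ bᶜ :=
            inf_le_inf_right bᶜ inf_le_left
        _ = aᶜ ⊓ bᶜ := equiv_inf_compl_right hOM a b
        _ ≤ aᶜ := inf_le_left
    have hle2 : (olEquiv a b ⊓ olEquiv b c) ⊓ bᶜ ≤ cᶜ := by
      calc (olEquiv a b ⊓ olEquiv b c) ⊓ bᶜ ≤ olEquiv b c ⊓ bᶜ :=
            inf_le_inf_right bᶜ inf_le_right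
        _ = cᶜ ⊓ bᶜ := by rw [equiv_comm b c, equiv_inf_compl_right hOM c b]
        _ ≤ cᶜ := inf_le_left
    exact le_trans (le_inf hle1 hle2) le_sup_right
  calc olEquiv a b ⊓ olEquiv b c
      = ((olEquiv a b ⊓ olEquiv b c) ⊓ b) ⊔ ((olEquiv a b ⊓ olEquiv b c) ⊓ bᶜ) := hef
    _ ≤ olEquiv a c := sup_le h1 h2

end OLAux

open OLAux in
/-- In an orthomodular ortholattice the three displayed conditions are equivalent. -/
theorem stmt_2 (α : Type*) [Ortholattice α]
    (hOM : ∀ a b : α, a ≤ b → a ⊔ (aᶜ ⊓ b) = b) (a b c : α) :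
    List.TFAE
      [ olEquiv a b ⊓ (olEquiv b c ⊔ olEquiv a c) ≤ olEquiv a c,
        (olEquiv a b)ᶜ ⊔ olEquiv (olEquiv a c) (olEquiv b c) = ⊤,
        olEquiv a b ⊓ (olEquiv b c ⊔ olEquiv a c) =
          (olEquiv a b ⊓ olEquiv b c) ⊔ (olEquiv a b ⊓ olEquiv a c) ] := by
  set e := olEquiv a b with he
  set f := olEquiv b c with hf
  set g := olEquiv a c with hg
  have hef : e ⊓ f ≤ g := equiv_trans hOM a b c
  have heg : e ⊓ g ≤ f := by
    have h := equiv_trans hOM b a c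
    rwa [equiv_comm b a, ← he, ← hg, ← hf] at h
  have hfg : f ⊓ g ≤ e := by
    have h := equiv_trans hOM b c a
    rwa [← hf, equiv_comm c a, ← hg, equiv_comm b a, ← he] at h
  tfae_have 1 → 3 := by
    intro h1
    apply le_antisymm
    · have hle : e ⊓ (f ⊔ g) ≤ e ⊓ g := le_inf inf_le_left h1
      exact le_trans hle le_sup_right
    · exact sup_le (inf_le_inf_left e le_sup_left) (inf_le_inf_left e le_sup_right)
  tfae_have 3 → 1 := by
    intro h3
    rw [h3]
    exact sup_le hef inf_le_right
  tfae_have 1 → 2 := by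
    intro h1
    apply eq_top_of_compl_eq_bot
    rw [ocSup, cc]
    have hcompl : (olEquiv g f)ᶜ = (g ⊓ f)ᶜ ⊓ (g ⊔ f) := by
      unfold olEquiv
      rw [ocSup, ocInf, ocInf, cc, cc]
    rw [hcompl]
    apply le_bot_iff.mp
    have hu : e ⊓ (g ⊔ f) ≤ g ⊓ f := by
      have h' : e ⊓ (f ⊔ g) ≤ g ⊓ f := by
        apply le_inf h1
        exact le_trans (le_inf inf_le_left h1) heg
      rwa [sup_comm g f]
    calc e ⊓ ((g ⊓ f)ᶜ ⊓ (g ⊔ f)) = (e ⊓ (g ⊔ f)) ⊓ (g ⊓ f)ᶜ := by ac_rfl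
      _ ≤ (g ⊓ f) ⊓ (g ⊓ f)ᶜ := inf_le_inf_right _ hu
      _ = ⊥ := oinf_compl _
  tfae_have 2 → 1 := by
    intro h2
    have hbot : e ⊓ ((g ⊓ f)ᶜ ⊓ (g ⊔ f)) = ⊥ := by
      have h := congrArg (·ᶜ) h2
      rw [ocTop, ocSup, cc] at h
      have hcompl : (olEquiv g f)ᶜ = (g ⊓ f)ᶜ ⊓ (g ⊔ f) := by
        unfold olEquiv
        rw [ocSup, ocInf, ocInf, cc, cc]
      rwa [hcompl] at h
    have hvu : f ⊓ g ≤ e ⊓ (f ⊔ g) :=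
      le_inf hfg (le_trans inf_le_left le_sup_left)
    have hom := hOM (f ⊓ g) (e ⊓ (f ⊔ g)) hvu
    have hz : (f ⊓ g)ᶜ ⊓ (e ⊓ (f ⊔ g)) = ⊥ := by
      rw [inf_comm g f, sup_comm g f] at hbot
      rw [← hbot]; ac_rfl
    rw [hz, sup_bot_eq] at hom
    rw [← hom]
    exact inf_le_right
  tfae_finish
end

section
/- Let L be an orthomodular ortholattice. Then L satisfies the 4OA law — for all a, b, c, d ∈ L, (a →₁ d) ⊓ (a ≡(c,d) b) ≤ b →₁ d — if and only if L satisfies Day's 6-variable orthoarguesian law: for all a, b, c, d, e, f ∈ L with a ≤ bᶜ, c ≤ dᶜ, e ≤ fᶜ, one has (a ⊔ b) ⊓ (c ⊔ d) ⊓ (e ⊔ f) ≤ b ⊔ (a ⊓ (c ⊔ (((a ⊔ c) ⊓ (b ⊔ d)) ⊓ (((a ⊔ e) ⊓ (b ⊔ f)) ⊔ ((c ⊔ e) ⊓ (d ⊔ f)))))). -/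
/-- The Sasaki implication `a →₁ b = aᶜ ⊔ (a ⊓ b)`. -/
def olImp1 {α : Type*} [Ortholattice α] (a b : α) : α := aᶜ ⊔ (a ⊓ b)

/-- The 3-variable orthoarguesian identity
`a ≡c b = ((a →₁ c) ⊓ (b →₁ c)) ⊔ ((aᶜ →₁ c) ⊓ (bᶜ →₁ c))`. -/
def oa3 {α : Type*} [Ortholattice α] (c a b : α) : α :=
  (olImp1 a c ⊓ olImp1 b c) ⊔ (olImp1 aᶜ c ⊓ olImp1 bᶜ c)

/-- The 4-variable orthoarguesian identity
`a ≡(c,d) b = (a ≡d b) ⊔ ((a ≡d c) ⊓ (b ≡d c))`. -/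
def oa4 {α : Type*} [Ortholattice α] (c d a b : α) : α :=
  oa3 d a b ⊔ (oa3 d a c ⊓ oa3 d b c)

section OrthoAux

variable {α : Type*} [Ortholattice α]

private lemma occ (x : α) : xᶜᶜ = x := Ortholattice.compl_compl x

private lemma oanti {x y : α} (h : x ≤ y) : yᶜ ≤ xᶜ := Ortholattice.compl_antitone x y h

private lemma odm_sup (x y : α) : (x ⊔ y)ᶜ = xᶜ ⊓ yᶜ := by
  apply le_antisymm
  · exact le_inf (oanti le_sup_left) (oanti le_sup_right)
  · have hx : x ≤ (xᶜ ⊓ yᶜ)ᶜ := by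
      have h := oanti (inf_le_left : xᶜ ⊓ yᶜ ≤ xᶜ); rwa [occ] at h
    have hy : y ≤ (xᶜ ⊓ yᶜ)ᶜ := by
      have h := oanti (inf_le_right : xᶜ ⊓ yᶜ ≤ yᶜ); rwa [occ] at h
    have h := oanti (sup_le hx hy)
    rwa [occ] at h

private lemma odm_inf (x y : α) : (x ⊓ y)ᶜ = xᶜ ⊔ yᶜ := by
  have h := odm_sup xᶜ yᶜ
  rw [occ, occ] at h
  rw [← h, occ]

private lemma obot {x y : α} (h1 : x ≤ y) (h2 : x ≤ yᶜ) : x = ⊥ := by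
  apply le_antisymm _ bot_le
  have h : x ≤ y ⊓ yᶜ := le_inf h1 h2
  rwa [Ortholattice.inf_compl] at h

private lemma compl_olImp1 (x y : α) : (olImp1 x y)ᶜ = x ⊓ (xᶜ ⊔ yᶜ) := by
  simp only [olImp1]
  rw [odm_sup, odm_inf, occ]

private lemma compl_imp_le (x y : α) : (olImp1 x y)ᶜ ≤ x := by
  rw [compl_olImp1]; exact inf_le_left

private lemma le_imp_compl (x y : α) : x ≤ olImp1 xᶜ y := by
  show x ≤ xᶜᶜ ⊔ (xᶜ ⊓ y)
  rw [occ]; exact le_sup_left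

section OM
variable (hOM : ∀ a b : α, a ≤ b → a ⊔ (aᶜ ⊓ b) = b)
include hOM

private lemma om_dual {x y : α} (h : y ≤ x) : x ⊓ (xᶜ ⊔ y) = y := by
  have h2 := hOM xᶜ yᶜ (oanti h)
  have h3 : (xᶜ ⊔ (xᶜᶜ ⊓ yᶜ))ᶜ = yᶜᶜ := by rw [h2]
  rw [odm_sup, odm_inf, occ, occ] at h3
  exact h3

private lemma ortho_absorb {u v : α} (h : u ≤ vᶜ) : vᶜ ⊓ (u ⊔ v) = u := by
  have hu : u ≤ vᶜ ⊓ (u ⊔ v) := le_inf h le_sup_left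
  have hz : uᶜ ⊓ (vᶜ ⊓ (u ⊔ v)) = ⊥ := by
    apply obot (y := u ⊔ v)
    · exact inf_le_right.trans inf_le_right
    · rw [odm_sup]
      exact le_inf inf_le_left (inf_le_right.trans inf_le_left)
  have h4 := hOM u (vᶜ ⊓ (u ⊔ v)) hu
  rw [hz, sup_bot_eq] at h4
  exact h4.symm

private lemma ocomm_symm {a b : α} (h : a = a ⊓ b ⊔ a ⊓ bᶜ) :
    b = b ⊓ a ⊔ b ⊓ aᶜ := by
  have hac : aᶜ = (aᶜ ⊔ bᶜ) ⊓ (aᶜ ⊔ b) := by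
    conv_lhs => rw [h]
    rw [odm_sup, odm_inf, odm_inf, occ]
  have h2 : b ⊓ aᶜ = b ⊓ (aᶜ ⊔ bᶜ) := by
    apply le_antisymm
    · exact le_inf inf_le_left (inf_le_right.trans le_sup_left)
    · apply le_inf inf_le_left
      conv_rhs => rw [hac]
      exact le_inf inf_le_right (inf_le_left.trans le_sup_right)
  have h3 := hOM (a ⊓ b) b inf_le_right
  rw [inf_comm b a, h2, ← odm_inf, inf_comm b (a ⊓ b)ᶜ]
  exact h3.symm

omit hOM in
private lemma ocomm_flip {a b : α} (h : a = a ⊓ b ⊔ a ⊓ bᶜ) :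
    a = a ⊓ bᶜ ⊔ a ⊓ bᶜᶜ := by
  rw [occ, sup_comm]; exact h

private lemma ocomm_compl_left {a b : α} (h : a = a ⊓ b ⊔ a ⊓ bᶜ) :
    aᶜ = aᶜ ⊓ b ⊔ aᶜ ⊓ bᶜ := by
  have h1 := ocomm_symm hOM h
  have h2 := ocomm_flip h1
  exact ocomm_symm hOM h2

omit hOM in
private lemma ocomm_sup {x y a : α} (hx : x = x ⊓ a ⊔ x ⊓ aᶜ)
    (hy : y = y ⊓ a ⊔ y ⊓ aᶜ) :
    x ⊔ y = (x ⊔ y) ⊓ a ⊔ (x ⊔ y) ⊓ aᶜ := by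
  apply le_antisymm
  · conv_lhs => rw [hx, hy]
    apply sup_le <;> apply sup_le
    · exact (inf_le_inf_right a le_sup_left).trans le_sup_left
    · exact (inf_le_inf_right aᶜ le_sup_left).trans le_sup_right
    · exact (inf_le_inf_right a le_sup_right).trans le_sup_left
    · exact (inf_le_inf_right aᶜ le_sup_right).trans le_sup_right
  · exact sup_le inf_le_left inf_le_left

private lemma ocomm_inf {x y a : α} (hx : x = x ⊓ a ⊔ x ⊓ aᶜ)
    (hy : y = y ⊓ a ⊔ y ⊓ aᶜ) :
    x ⊓ y = (x ⊓ y) ⊓ a ⊔ (x ⊓ y) ⊓ aᶜ := by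
  have h1 := ocomm_sup (ocomm_compl_left hOM hx) (ocomm_compl_left hOM hy)
  have h2 := ocomm_compl_left hOM h1
  rwa [odm_sup, occ, occ] at h2

private lemma imp_inf_self (x d : α) : olImp1 x d ⊓ x = x ⊓ d := by
  simp only [olImp1]
  rw [inf_comm]
  exact om_dual hOM inf_le_left

private lemma imp_compl_inf (x d : α) : olImp1 xᶜ d ⊓ xᶜ = xᶜ ⊓ d := by
  simp only [olImp1]
  rw [inf_comm]
  exact om_dual hOM inf_le_left

private lemma ocomm_imp_self (x d : α) :
    olImp1 x d = olImp1 x d ⊓ x ⊔ olImp1 x d ⊓ xᶜ := by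
  rw [imp_inf_self hOM]
  have h2 : olImp1 x d ⊓ xᶜ = xᶜ := inf_eq_right.mpr le_sup_left
  rw [h2]
  show xᶜ ⊔ (x ⊓ d) = x ⊓ d ⊔ xᶜ
  exact sup_comm _ _

private lemma ocomm_imp_compl_self (x d : α) :
    olImp1 xᶜ d = olImp1 xᶜ d ⊓ x ⊔ olImp1 xᶜ d ⊓ xᶜ := by
  have h1 : olImp1 xᶜ d ⊓ x = x := inf_eq_right.mpr (le_imp_compl x d)
  rw [h1, imp_compl_inf hOM]
  simp only [olImp1, occ]

private lemma okey (x d : α) : olImp1 x d ⊓ olImp1 xᶜ d ≤ d := by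
  have hc := ocomm_inf hOM (ocomm_imp_self hOM x d) (ocomm_imp_compl_self hOM x d)
  calc olImp1 x d ⊓ olImp1 xᶜ d
      = (olImp1 x d ⊓ olImp1 xᶜ d) ⊓ x ⊔ (olImp1 x d ⊓ olImp1 xᶜ d) ⊓ xᶜ := hc
    _ ≤ d := by
        apply sup_le
        · have h := inf_le_inf_right x (inf_le_left :
            olImp1 x d ⊓ olImp1 xᶜ d ≤ olImp1 x d)
          rw [imp_inf_self hOM] at h
          exact h.trans inf_le_right
        · have h := inf_le_inf_right xᶜ (inf_le_right :
            olImp1 x d ⊓ olImp1 xᶜ d ≤ olImp1 xᶜ d)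
          rw [imp_compl_inf hOM] at h
          exact h.trans inf_le_right

private lemma dir1
    (hDay : ∀ a b c d e f : α, a ≤ bᶜ → c ≤ dᶜ → e ≤ fᶜ →
        (a ⊔ b) ⊓ (c ⊔ d) ⊓ (e ⊔ f) ≤
          b ⊔ (a ⊓ (c ⊔ (((a ⊔ c) ⊓ (b ⊔ d)) ⊓
            (((a ⊔ e) ⊓ (b ⊔ f)) ⊔ ((c ⊔ e) ⊓ (d ⊔ f)))))))
    (a b c d : α) : olImp1 a d ⊓ oa4 c d a b ≤ olImp1 b d := by
  have ho : ∀ x : α, (olImp1 x d)ᶜ ≤ ((olImp1 xᶜ d)ᶜ)ᶜ := by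
    intro x
    rw [occ]
    exact (compl_imp_le x d).trans (le_imp_compl x d)
  have hD := hDay ((olImp1 b d)ᶜ) ((olImp1 bᶜ d)ᶜ) ((olImp1 a d)ᶜ) ((olImp1 aᶜ d)ᶜ)
      ((olImp1 c d)ᶜ) ((olImp1 cᶜ d)ᶜ) (ho b) (ho a) (ho c)
  have hj : ∀ x : α, dᶜ ≤ (olImp1 x d)ᶜ ⊔ (olImp1 xᶜ d)ᶜ := by
    intro x
    have h := oanti (okey hOM x d)
    rwa [odm_inf] at h
  have hm : dᶜ ≤ ((olImp1 b d)ᶜ ⊔ (olImp1 bᶜ d)ᶜ) ⊓ ((olImp1 a d)ᶜ ⊔ (olImp1 aᶜ d)ᶜ)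
      ⊓ ((olImp1 c d)ᶜ ⊔ (olImp1 cᶜ d)ᶜ) :=
    le_inf (le_inf (hj b) (hj a)) (hj c)
  have hZ : (((olImp1 b d)ᶜ ⊔ (olImp1 a d)ᶜ) ⊓ ((olImp1 bᶜ d)ᶜ ⊔ (olImp1 aᶜ d)ᶜ)) ⊓
        ((((olImp1 b d)ᶜ ⊔ (olImp1 c d)ᶜ) ⊓ ((olImp1 bᶜ d)ᶜ ⊔ (olImp1 cᶜ d)ᶜ)) ⊔
         (((olImp1 a d)ᶜ ⊔ (olImp1 c d)ᶜ) ⊓ ((olImp1 aᶜ d)ᶜ ⊔ (olImp1 cᶜ d)ᶜ)))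
      ≤ (oa4 c d a b)ᶜ := by
    simp only [oa4, oa3, odm_sup, odm_inf]
    apply inf_le_inf
    · exact le_inf (inf_le_left.trans (sup_le le_sup_right le_sup_left))
        (inf_le_right.trans (sup_le le_sup_right le_sup_left))
    · exact sup_le le_sup_right le_sup_left
  have hR : dᶜ ≤ (olImp1 bᶜ d)ᶜ ⊔ ((olImp1 b d)ᶜ ⊓ ((olImp1 a d)ᶜ ⊔ (oa4 c d a b)ᶜ)) := by
    refine (hm.trans hD).trans ?_
    exact sup_le_sup_left
      (inf_le_inf_left _ (sup_le le_sup_left (hZ.trans le_sup_right))) _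
  have hqb : (olImp1 bᶜ d)ᶜ ≤ bᶜ := oanti (le_imp_compl b d)
  have h2 : bᶜ ⊔ dᶜ ≤ bᶜ ⊔ ((olImp1 b d)ᶜ ⊓ ((olImp1 a d)ᶜ ⊔ (oa4 c d a b)ᶜ)) :=
    sup_le le_sup_left (hR.trans (sup_le (hqb.trans le_sup_left) le_sup_right))
  have h3 : (olImp1 b d)ᶜ ≤
      b ⊓ (bᶜ ⊔ ((olImp1 b d)ᶜ ⊓ ((olImp1 a d)ᶜ ⊔ (oa4 c d a b)ᶜ))) := by
    calc (olImp1 b d)ᶜ = b ⊓ (bᶜ ⊔ dᶜ) := compl_olImp1 b d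
      _ ≤ _ := inf_le_inf_left b h2
  have h4 : b ⊓ (bᶜ ⊔ ((olImp1 b d)ᶜ ⊓ ((olImp1 a d)ᶜ ⊔ (oa4 c d a b)ᶜ)))
      = (olImp1 b d)ᶜ ⊓ ((olImp1 a d)ᶜ ⊔ (oa4 c d a b)ᶜ) :=
    om_dual hOM (inf_le_left.trans (compl_imp_le b d))
  have h5 : (olImp1 b d)ᶜ ≤ (olImp1 a d)ᶜ ⊔ (oa4 c d a b)ᶜ :=
    (h3.trans_eq h4).trans inf_le_right
  have h6 := oanti h5
  rw [odm_sup, occ, occ, occ] at h6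
  exact h6

private lemma dir2
    (hOA : ∀ a b c d : α, olImp1 a d ⊓ oa4 c d a b ≤ olImp1 b d)
    (a b c d e f : α) (hab : a ≤ bᶜ) (hcd : c ≤ dᶜ) (hef : e ≤ fᶜ) :
    (a ⊔ b) ⊓ (c ⊔ d) ⊓ (e ⊔ f) ≤
      b ⊔ (a ⊓ (c ⊔ (((a ⊔ c) ⊓ (b ⊔ d)) ⊓
        (((a ⊔ e) ⊓ (b ⊔ f)) ⊔ ((c ⊔ e) ⊓ (d ⊔ f)))))) := by
  set m := (a ⊔ b) ⊓ (c ⊔ d) ⊓ (e ⊔ f) with hmdef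
  have psi1 : ∀ u v : α, u ≤ vᶜ → m ≤ u ⊔ v → (olImp1 vᶜ mᶜ)ᶜ ≤ u := by
    intro u v huv hmv
    have h1 : (olImp1 vᶜ mᶜ)ᶜ = vᶜ ⊓ (v ⊔ m) := by
      rw [compl_olImp1, occ, occ]
    rw [h1]
    have h2 : v ⊔ m ≤ u ⊔ v := sup_le le_sup_right hmv
    exact (inf_le_inf_left vᶜ h2).trans (le_of_eq (ortho_absorb hOM huv))
  have psi2 : ∀ v : α, (olImp1 vᶜᶜ mᶜ)ᶜ ≤ v := by
    intro v
    exact (compl_imp_le vᶜᶜ mᶜ).trans (le_of_eq (occ v))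
  have hmab : m ≤ a ⊔ b := inf_le_left.trans inf_le_left
  have hmcd : m ≤ c ⊔ d := inf_le_left.trans inf_le_right
  have hmef : m ≤ e ⊔ f := inf_le_right
  have hInst := hOA dᶜ bᶜ fᶜ mᶜ
  have hC : (olImp1 bᶜ mᶜ)ᶜ ≤ (olImp1 dᶜ mᶜ)ᶜ ⊔ (oa4 fᶜ mᶜ dᶜ bᶜ)ᶜ := by
    have h := oanti hInst
    rwa [odm_inf (olImp1 dᶜ mᶜ) (oa4 fᶜ mᶜ dᶜ bᶜ)] at h
  have hpb : (olImp1 bᶜ mᶜ)ᶜ ≤ a := psi1 a b hab hmab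
  have hpd : (olImp1 dᶜ mᶜ)ᶜ ≤ c := psi1 c d hcd hmcd
  have hpf : (olImp1 fᶜ mᶜ)ᶜ ≤ e := psi1 e f hef hmef
  have hX : (oa4 fᶜ mᶜ dᶜ bᶜ)ᶜ ≤
      ((a ⊔ c) ⊓ (b ⊔ d)) ⊓ (((a ⊔ e) ⊓ (b ⊔ f)) ⊔ ((c ⊔ e) ⊓ (d ⊔ f))) := by
    simp only [oa4, oa3, odm_sup, odm_inf]
    apply inf_le_inf
    · exact le_inf
        (inf_le_left.trans (sup_le (hpd.trans le_sup_right) (hpb.trans le_sup_left)))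
        (inf_le_right.trans (sup_le ((psi2 d).trans le_sup_right) ((psi2 b).trans le_sup_left)))
    · apply sup_le
      · refine le_sup_right.trans' ?_
        exact le_inf
          (inf_le_left.trans (sup_le (hpd.trans le_sup_left) (hpf.trans le_sup_right)))
          (inf_le_right.trans (sup_le ((psi2 d).trans le_sup_left) ((psi2 f).trans le_sup_right)))
      · refine le_sup_left.trans' ?_
        exact le_inf
          (inf_le_left.trans (sup_le (hpb.trans le_sup_left) (hpf.trans le_sup_right)))
          (inf_le_right.trans (sup_le ((psi2 b).trans le_sup_left) ((psi2 f).trans le_sup_right)))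
  have hbig : (olImp1 bᶜ mᶜ)ᶜ ≤
      a ⊓ (c ⊔ (((a ⊔ c) ⊓ (b ⊔ d)) ⊓
        (((a ⊔ e) ⊓ (b ⊔ f)) ⊔ ((c ⊔ e) ⊓ (d ⊔ f))))) :=
    le_inf hpb (hC.trans (sup_le (hpd.trans le_sup_left) (hX.trans le_sup_right)))
  have hm2 : m ≤ b ⊔ (olImp1 bᶜ mᶜ)ᶜ := by
    have h1 : (olImp1 bᶜ mᶜ)ᶜ = bᶜ ⊓ (b ⊔ m) := by
      rw [compl_olImp1, occ, occ]
    have h2 := hOM b (b ⊔ m) le_sup_left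
    rw [h1]
    calc m ≤ b ⊔ m := le_sup_right
      _ = b ⊔ bᶜ ⊓ (b ⊔ m) := h2.symm
  exact hm2.trans (sup_le le_sup_left (hbig.trans le_sup_right))

end OM
end OrthoAux

/-- An orthomodular ortholattice satisfies the 4OA law iff it satisfies Day'\''s
6-variable orthoarguesian law. -/
theorem stmt_15 (α : Type*) [Ortholattice α]
    (hOM : ∀ a b : α, a ≤ b → a ⊔ (aᶜ ⊓ b) = b) :
    (∀ a b c d : α, olImp1 a d ⊓ oa4 c d a b ≤ olImp1 b d) ↔
      (∀ a b c d e f : α, a ≤ bᶜ → c ≤ dᶜ → e ≤ fᶜ →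
        (a ⊔ b) ⊓ (c ⊔ d) ⊓ (e ⊔ f) ≤
          b ⊔ (a ⊓ (c ⊔ (((a ⊔ c) ⊓ (b ⊔ d)) ⊓
            (((a ⊔ e) ⊓ (b ⊔ f)) ⊔ ((c ⊔ e) ⊓ (d ⊔ f))))))) := by
  constructor
  · intro h4 a b c d e f hab hcd hef
    exact dir2 hOM h4 a b c d e f hab hcd hef
  · intro hDay a b c d
    exact dir1 hOM hDay a b c d
end
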